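/- Let D be a positive integer, n ≥ 0 an integer, h > 0, λ_s ∈ ℝ, and let x̂ : ℝ → ℝ^D be (n+1)-times continuously differentiable on [λ_s, λ_s + h] with ‖x̂^{(n+1)}(u)‖ ≤ M for all u ∈ [λ_s, λ_s + h]. Then ‖ ∫_0^h e^{u−h} x̂(λ_s + u) du − Σ_{k=0}^{n} x̂^{(k)}(λ_s) · J_k(h) ‖ ≤ M · h^{n+2}/(n+2)!, where J_k(h) := ∫_0^h e^{u−h} u^k/k! du = Σ_{j=1}^{k} (−1)^{k−j} h^j/j! + (−1)^k(1 − e^{−h}). That is, the n-th order Taylor expansion of the data-prediction exponential integral has truncation error of order h^{n+2}. -/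

import Mathlib

open Set intervalIntegral


theorem taylor_bound_sharp {E : Type*} [NormedAddCommGroup E] [NormedSpace ℝ E]
    {f : ℝ → E} {a b C x : ℝ} {n : ℕ} (hab : a ≤ b)
    (hf : ContDiffOn ℝ (n + 1 : ℕ) f (Icc a b)) (hx : x ∈ Icc a b)
    (hC : ∀ y ∈ Icc a b, ‖iteratedDerivWithin (n + 1) f (Icc a b) y‖ ≤ C) :
    ‖f x - taylorWithinEval f n (Icc a b) a x‖ ≤
      C * (x - a) ^ (n + 1) / ((n+1).factorial : ℝ) := by
  have hC0 : 0 ≤ C := le_trans (norm_nonneg _) (hC a ⟨le_refl a, hab⟩)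
  rcases eq_or_lt_of_le hab with (rfl | hab')
  · rw [Icc_self, mem_singleton_iff] at hx
    simp [hx]
  have hf' : DifferentiableOn ℝ (iteratedDerivWithin n f (Icc a b)) (Icc a b) :=
    hf.differentiableOn_iteratedDerivWithin (mod_cast n.lt_succ_self) (uniqueDiffOn_Icc hab')
  set g : ℝ → E := fun t => taylorWithinEval f n (Icc a b) t x -
    taylorWithinEval f n (Icc a b) a x with hg
  set B : ℝ → ℝ := fun t =>
    C * (((x - a) ^ (n + 1) - (x - t) ^ (n + 1)) / ((n+1).factorial : ℝ)) with hB
  set F : ℝ → E := fun t =>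
    ((n.factorial : ℝ)⁻¹ * (x - t) ^ n) • iteratedDerivWithin (n + 1) f (Icc a b) t with hF
  have hax : a ≤ x := hx.1
  have hder : ∀ t ∈ Icc a x, HasDerivWithinAt (fun y => taylorWithinEval f n (Icc a b) y x)
      (F t) (Icc a x) t := fun t ht =>
    (hasDerivWithinAt_taylorWithinEval_at_Icc x hab'
      (Icc_subset_Icc_right hx.2 ht) hf.of_succ hf').mono (Icc_subset_Icc_right hx.2)
  have hcont : ContinuousOn g (Icc a x) := fun t ht =>
    ((hder t ht).continuousWithinAt.sub continuousWithinAt_const)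
  have hderg : ∀ t ∈ Ico a x, HasDerivWithinAt g (F t) (Ici t) t := by
    intro t ht
    have hmem : Icc a x ∈ nhdsWithin t (Ici t) := by
      have hsub : Ici t ∩ Iio x ⊆ Icc a x := fun z hz => ⟨le_trans ht.1 hz.1, le_of_lt hz.2⟩
      exact Filter.mem_of_superset (inter_mem_nhdsWithin _ (Iio_mem_nhds ht.2)) hsub
    have := (((hder t (Ico_subset_Icc_self ht)).sub
      (hasDerivWithinAt_const t _ (taylorWithinEval f n (Icc a b) a x))).mono_of_mem_nhdsWithin hmem)
    rw [sub_zero] at this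
    exact this
  have hBderiv : ∀ t : ℝ, HasDerivAt B (C * ((x - t) ^ n / (n.factorial : ℝ))) t := by
    intro t
    have h1 : HasDerivAt (fun t : ℝ => (x - t) ^ (n + 1))
        (-(((n : ℝ) + 1) * (x - t) ^ n)) t := by
      have := ((hasDerivAt_pow (n + 1) (x - t)).comp t ((hasDerivAt_id t).const_sub x))
      convert this using 1
      · rfl
      · rfl
      · rfl
      · simp
    have h2 : HasDerivAt B
        (C * ((0 - -(((n : ℝ) + 1) * (x - t) ^ n)) / ((n+1).factorial : ℝ))) t :=
      (((hasDerivAt_const t ((x - a) ^ (n + 1))).sub h1).div_const _).const_mul C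
    convert h2 using 1
    have hfac : ((n + 1).factorial : ℝ) = ((n : ℝ) + 1) * (n.factorial : ℝ) := by
      rw [Nat.factorial_succ]; push_cast; ring
    rw [hfac]
    have hn0 : (n.factorial : ℝ) ≠ 0 := Nat.cast_ne_zero.2 n.factorial_ne_zero
    have hn1 : (n : ℝ) + 1 ≠ 0 := by positivity
    field_simp
    ring
  have hbound : ∀ t ∈ Ico a x, ‖F t‖ ≤ C * ((x - t) ^ n / (n.factorial : ℝ)) := by
    intro t ht
    rw [hF]
    have hxt : 0 ≤ x - t := sub_nonneg.2 ht.2.le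
    rw [norm_smul, Real.norm_eq_abs, abs_mul, abs_pow, abs_of_nonneg hxt, abs_inv, Nat.abs_cast]
    calc (n.factorial : ℝ)⁻¹ * (x - t) ^ n * ‖iteratedDerivWithin (n + 1) f (Icc a b) t‖
        ≤ (n.factorial : ℝ)⁻¹ * (x - t) ^ n * C :=
          mul_le_mul_of_nonneg_left (hC t ⟨ht.1, ht.2.le.trans hx.2⟩) (by positivity)
      _ = C * ((x - t) ^ n / (n.factorial : ℝ)) := by ring
  have hga : ‖g a‖ ≤ B a := by simp [hg, hB]
  have key := image_norm_le_of_norm_deriv_right_le_deriv_boundary hcont hderg hga hBderiv hbound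
    (right_mem_Icc.2 hax)
  have hgx : g x = f x - taylorWithinEval f n (Icc a b) a x := by
    simp [hg]
  rw [hgx] at key
  calc ‖f x - taylorWithinEval f n (Icc a b) a x‖
      ≤ C * (((x - a) ^ (n + 1) - (x - x) ^ (n + 1)) / ((n+1).factorial : ℝ)) := key
    _ = C * (x - a) ^ (n + 1) / ((n+1).factorial : ℝ) := by
        rw [sub_self, zero_pow (Nat.succ_ne_zero n)]; ring


lemma J_base (h : ℝ) : (∫ u in (0:ℝ)..h, Real.exp (u - h) * u ^ 0 / ((0:ℕ).factorial : ℝ))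
    = 1 - Real.exp (-h) := by
  simp only [pow_zero, Nat.factorial_zero, Nat.cast_one, mul_one, div_one]
  have : ∀ u ∈ uIcc (0:ℝ) h, HasDerivAt (fun u => Real.exp (u - h)) (Real.exp (u - h)) u := by
    intro u _
    simpa using ((hasDerivAt_id u).sub_const h).exp
  rw [integral_eq_sub_of_hasDerivAt this]
  · simp
  · exact (Real.continuous_exp.comp (continuous_id.sub continuous_const)).intervalIntegrable _ _

lemma J_rec (h : ℝ) (k : ℕ) :
    (∫ u in (0:ℝ)..h, Real.exp (u - h) * u ^ (k+1) / ((k+1).factorial : ℝ))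
    = h ^ (k+1) / ((k+1).factorial : ℝ)
      - ∫ u in (0:ℝ)..h, Real.exp (u - h) * u ^ k / (k.factorial : ℝ) := by
  have hfac : ((k+1).factorial : ℝ) = ((k:ℝ)+1) * (k.factorial : ℝ) := by
    rw [Nat.factorial_succ]; push_cast; ring
  have hk0 : (k.factorial : ℝ) ≠ 0 := Nat.cast_ne_zero.2 k.factorial_ne_zero
  have hk1 : ((k:ℝ)+1) ≠ 0 := by positivity
  have hderiv : ∀ u ∈ uIcc (0:ℝ) h,
      HasDerivAt (fun u => Real.exp (u - h) * (u ^ (k+1) / ((k+1).factorial : ℝ)))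
        (Real.exp (u - h) * u ^ (k+1) / ((k+1).factorial : ℝ)
          + Real.exp (u - h) * u ^ k / (k.factorial : ℝ)) u := by
    intro u _
    have h1 : HasDerivAt (fun u : ℝ => Real.exp (u - h)) (Real.exp (u - h)) u := by
      simpa using ((hasDerivAt_id u).sub_const h).exp
    have h2 : HasDerivAt (fun u : ℝ => u ^ (k+1) / ((k+1).factorial : ℝ))
        (((k:ℝ)+1) * u ^ k / ((k+1).factorial : ℝ)) u := by
      simpa using (hasDerivAt_pow (k+1) u).div_const ((k+1).factorial : ℝ)
    convert h1.mul h2 using 1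
    · rfl
    · rfl
    · rfl
    rw [hfac]
    field_simp
  have hcont : ∀ m : ℕ, Continuous (fun u : ℝ => Real.exp (u - h) * u ^ m / (m.factorial : ℝ)) := by
    intro m
    exact ((Real.continuous_exp.comp (continuous_id.sub continuous_const)).mul
      (continuous_pow m)).div_const _
  have hint : ∀ m : ℕ, IntervalIntegrable
      (fun u : ℝ => Real.exp (u - h) * u ^ m / (m.factorial : ℝ)) MeasureTheory.volume 0 h :=
    fun m => (hcont m).intervalIntegrable _ _
  have := integral_eq_sub_of_hasDerivAt hderiv (((hint (k+1)).add (hint k)))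
  rw [integral_add (hint (k+1)) (hint k)] at this
  have h0 : (0:ℝ) ^ (k+1) = 0 := zero_pow (Nat.succ_ne_zero k)
  rw [eq_sub_iff_add_eq]
  rw [this]
  simp [Real.exp_zero]

lemma J_closed (h : ℝ) (k : ℕ) :
    (∫ u in (0:ℝ)..h, Real.exp (u - h) * u ^ k / (k.factorial : ℝ))
    = (∑ j ∈ Finset.Icc 1 k, (-1 : ℝ) ^ (k - j) * h ^ j / (j.factorial : ℝ)) +
        (-1 : ℝ) ^ k * (1 - Real.exp (-h)) := by
  induction k with
  | zero => simpa using J_base h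
  | succ k ih =>
    rw [J_rec, ih, Finset.sum_Icc_succ_top (Nat.le_add_left 1 k)]
    have hterm : ∀ j ∈ Finset.Icc 1 k, (-1:ℝ)^(k+1-j) * h^j / (j.factorial : ℝ)
        = -((-1:ℝ)^(k-j) * h^j / (j.factorial : ℝ)) := by
      intro j hj
      have hjk : j ≤ k := (Finset.mem_Icc.mp hj).2
      have he : k + 1 - j = (k - j) + 1 := by omega
      rw [he, pow_succ]
      ring
    rw [Finset.sum_congr rfl hterm, Finset.sum_neg_distrib]
    simp only [Nat.sub_self, pow_zero, pow_succ]
    ring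

/-- The `n`-th order Taylor expansion of the data-prediction exponential
integral has truncation error of order `h^(n+2)`. -/
theorem stmt_5 (D n : ℕ) (hD : 0 < D) (h M : ℝ) (hh : 0 < h) (l : ℝ)
    (xhat : ℝ → EuclideanSpace ℝ (Fin D))
    (hx : ContDiffOn ℝ (n + 1 : ℕ) xhat (Set.Icc l (l + h)))
    (hM : ∀ u ∈ Set.Icc l (l + h),
      ‖iteratedDerivWithin (n + 1) xhat (Set.Icc l (l + h)) u‖ ≤ M)
    (J : ℕ → ℝ → ℝ)
    (hJ : ∀ (k : ℕ) (h' : ℝ),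
      J k h' = ∫ u in (0:ℝ)..h', Real.exp (u - h') * u ^ k / (k.factorial : ℝ)) :
    (∀ k : ℕ,
      J k h = (∑ j ∈ Finset.Icc 1 k, (-1 : ℝ) ^ (k - j) * h ^ j / (j.factorial : ℝ)) +
        (-1 : ℝ) ^ k * (1 - Real.exp (-h))) ∧
    ‖(∫ u in (0:ℝ)..h, Real.exp (u - h) • xhat (l + u)) -
        ∑ k ∈ Finset.range (n + 1),
          J k h • iteratedDerivWithin k xhat (Set.Icc l (l + h)) l‖ ≤
      M * h ^ (n + 2) / ((n + 2).factorial : ℝ) := by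
  constructor
  · intro k
    rw [hJ]
    exact J_closed h k
  ·
    have hhle : l ≤ l + h := by linarith
    have hM0 : 0 ≤ M := le_trans (norm_nonneg _) (hM l ⟨le_refl l, hhle⟩)
    set s := Set.Icc l (l + h) with hs
    set T : ℕ → EuclideanSpace ℝ (Fin D) := fun k => iteratedDerivWithin k xhat s l with hT
    set P : ℝ → EuclideanSpace ℝ (Fin D) := fun u => taylorWithinEval xhat n s l (l + u) with hP
    have hPsum : ∀ u : ℝ, P u = ∑ k ∈ Finset.range (n + 1),
        (((k.factorial : ℝ))⁻¹ * u ^ k) • T k := by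
      intro u
      show taylorWithinEval xhat n s l (l + u) = _
      rw [taylor_within_apply]
      simp [add_sub_cancel_left]
      rfl
    -- integrability
    have hmap : Set.MapsTo (fun u : ℝ => l + u) (Set.uIcc 0 h) s := by
      intro u hu
      rw [Set.uIcc_of_le hh.le] at hu
      simp only [hs, Set.mem_Icc]
      constructor <;> linarith [hu.1, hu.2]
    have hexp : Continuous (fun u : ℝ => Real.exp (u - h)) :=
      Real.continuous_exp.comp (continuous_id.sub continuous_const)
    have hcontx : ContinuousOn (fun u : ℝ => xhat (l + u)) (Set.uIcc 0 h) :=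
      hx.continuousOn.comp (continuous_const.add continuous_id).continuousOn hmap
    have hintf : IntervalIntegrable (fun u : ℝ => Real.exp (u - h) • xhat (l + u))
        MeasureTheory.volume 0 h :=
      (hexp.continuousOn.smul hcontx).intervalIntegrable
    have hcontP : Continuous P := by
      have : Continuous fun u : ℝ => ∑ k ∈ Finset.range (n + 1),
          (((k.factorial : ℝ))⁻¹ * u ^ k) • T k := by
        refine continuous_finset_sum _ fun k _ => ?_
        exact (continuous_const.mul (continuous_pow k)).smul continuous_const
      exact this.congr fun u => (hPsum u).symm
    have hintP : IntervalIntegrable (fun u : ℝ => Real.exp (u - h) • P u)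
        MeasureTheory.volume 0 h :=
      (hexp.smul hcontP).intervalIntegrable _ _
    -- the sum equals an integral
    have hstep : (∫ u in (0:ℝ)..h, Real.exp (u - h) • P u)
        = ∑ k ∈ Finset.range (n + 1), J k h • T k := by
      have hpt : ∀ u : ℝ, Real.exp (u - h) • P u = ∑ k ∈ Finset.range (n + 1),
          (Real.exp (u - h) * u ^ k / (k.factorial : ℝ)) • T k := by
        intro u
        rw [hPsum u, Finset.smul_sum]
        refine Finset.sum_congr rfl fun k _ => ?_
        rw [smul_smul]
        congr 1
        ring
      simp_rw [hpt]
      rw [intervalIntegral.integral_finset_sum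
        (f := fun k u => (Real.exp (u - h) * u ^ k / (k.factorial : ℝ)) • T k)
        (fun k _ => ((hexp.mul (continuous_pow k)).div_const
        _ |>.smul continuous_const).intervalIntegrable _ _)]
      refine Finset.sum_congr rfl fun k _ => ?_
      rw [intervalIntegral.integral_smul_const, hJ]
    -- rewrite difference as single integral
    have hdiffeq : (∫ u in (0:ℝ)..h, Real.exp (u - h) • xhat (l + u)) -
        ∑ k ∈ Finset.range (n + 1), J k h • T k
        = ∫ u in (0:ℝ)..h, Real.exp (u - h) • (xhat (l + u) - P u) := by
      rw [← hstep, ← intervalIntegral.integral_sub hintf hintP]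
      congr 1
      ext u
      rw [smul_sub]
    rw [hdiffeq]
    -- bound
    have hbound : ∀ u ∈ Set.Icc (0:ℝ) h,
        ‖Real.exp (u - h) • (xhat (l + u) - P u)‖ ≤ M * u ^ (n + 1) / ((n+1).factorial : ℝ) := by
      intro u hu
      rw [norm_smul, Real.norm_eq_abs, abs_of_pos (Real.exp_pos _)]
      have he1 : Real.exp (u - h) ≤ 1 := Real.exp_le_one_iff.mpr (by linarith [hu.2])
      have htb : ‖xhat (l + u) - P u‖ ≤ M * (l + u - l) ^ (n + 1) / ((n+1).factorial : ℝ) :=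
        taylor_bound_sharp hhle hx ⟨by linarith [hu.1], by linarith [hu.2]⟩ hM
      rw [add_sub_cancel_left] at htb
      calc Real.exp (u - h) * ‖xhat (l + u) - P u‖
          ≤ 1 * (M * u ^ (n + 1) / ((n+1).factorial : ℝ)) :=
            mul_le_mul he1 htb (norm_nonneg _) zero_le_one
        _ = M * u ^ (n + 1) / ((n+1).factorial : ℝ) := one_mul _
    calc ‖∫ u in (0:ℝ)..h, Real.exp (u - h) • (xhat (l + u) - P u)‖
        ≤ ∫ u in (0:ℝ)..h, ‖Real.exp (u - h) • (xhat (l + u) - P u)‖ :=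
          intervalIntegral.norm_integral_le_integral_norm hh.le
      _ ≤ ∫ u in (0:ℝ)..h, M * u ^ (n + 1) / ((n+1).factorial : ℝ) := by
          apply intervalIntegral.integral_mono_on hh.le
          · exact (hexp.continuousOn.smul (hcontx.sub hcontP.continuousOn)).norm.intervalIntegrable
          · exact (((continuous_const.mul (continuous_pow (n+1))).div_const
              _)).intervalIntegrable _ _
          · exact hbound
      _ = M * h ^ (n + 2) / ((n + 2).factorial : ℝ) := by
          have : ∀ u : ℝ, M * u ^ (n + 1) / ((n+1).factorial : ℝ)
              = (M / ((n+1).factorial : ℝ)) * u ^ (n + 1) := fun u => by ring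
          simp_rw [this]
          rw [intervalIntegral.integral_const_mul, integral_pow]
          have hfac : ((n + 2).factorial : ℝ) = ((n:ℝ) + 2) * ((n+1).factorial : ℝ) := by
            rw [show n + 2 = (n+1) + 1 by ring, Nat.factorial_succ]
            push_cast; ring
          rw [hfac, zero_pow (by omega : n + 1 + 1 ≠ 0), sub_zero]
          have h1 : ((n+1).factorial : ℝ) ≠ 0 := Nat.cast_ne_zero.2 (n+1).factorial_ne_zero
          have h2 : ((n:ℝ) + 2) ≠ 0 := by positivity
          have h3 : h ^ (n + 1 + 1) = h ^ (n + 2) := by norm_num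
          rw [h3]
          push_cast
          field_simp
          ring
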